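/- Let F : ℝⁿ → ℝ ∪ {+∞} be proper closed convex with nonempty minimizer set X* and minimal value F*, let γ > 0 and q ∈ [1,2), and let F_γ be the Moreau envelope of F. Fix x₀. Suppose F satisfies q-growth with constant κ > 0 on the level set {y : F(y) ≤ F(x₀)}, i.e. F(y) − F* ≥ (κ/q)‖y − ȳ‖^q for all such y (ȳ the Euclidean projection of y onto X*), and suppose there is R > 0 such that ‖x − x*‖ ≤ R for every x with F_γ(x) ≤ F_γ(x₀) and every x* ∈ X*. Then for every x with F_γ(x) ≤ F_γ(x₀): F_γ(x) − F* ≥ κ²γ/(2(κγ + R^{2−q})²) · ‖x − x̄‖², where x̄ is the Euclidean projection of x onto X*. -/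

import Mathlib

lemma pow_bound (x R q : ℝ) (hx : 0 ≤ x) (hR : 0 < R) (hxR : x ≤ R)
    (hq1 : 1 ≤ q) (hq2 : q < 2) : x ^ 2 ≤ x ^ q * R ^ (2 - q) := by
  rcases eq_or_lt_of_le hx with h0 | h0
  · rw [← h0, Real.zero_rpow (by linarith : q ≠ 0)]
    norm_num
  · have h1 : x ^ (2:ℝ) = x ^ q * x ^ (2 - q) := by
      rw [← Real.rpow_add h0]; norm_num
    have h2 : x ^ (2 - q) ≤ R ^ (2 - q) :=
      Real.rpow_le_rpow hx hxR (by linarith)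
    have h3 : x ^ (2:ℝ) = x ^ (2:ℕ) := by
      rw [show (2:ℝ) = ((2:ℕ):ℝ) by norm_num, Real.rpow_natCast]
    calc x ^ 2 = x ^ (2:ℝ) := h3.symm
    _ = x ^ q * x ^ (2 - q) := h1
    _ ≤ x ^ q * R ^ (2 - q) :=
        mul_le_mul_of_nonneg_left h2 (Real.rpow_nonneg hx q)

lemma alg_ineq (κ γ t B a b s : ℝ) (hκ : 0 < κ) (hγ : 0 < γ) (ht : 0 < t)
    (hB0 : 0 ≤ B) (ha : 0 ≤ a) (hb : 0 ≤ b) (hs : 0 ≤ s) (hab : s ≤ a + b)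
    (hcase : s ^ 2 ≤ B * t ∨ b ^ 2 ≤ B * t) :
    κ ^ 2 * γ / (2 * (κ * γ + t) ^ 2) * s ^ 2 ≤ κ / 2 * B + 1 / (2 * γ) * a ^ 2 := by
  have key : κ * γ * s ^ 2 ≤ κ * γ * (κ * γ + t) * B + (κ * γ + t) * a ^ 2 := by
    rcases hcase with h3 | h1
    · nlinarith [mul_le_mul_of_nonneg_left h3 (mul_pos hκ hγ).le, sq_nonneg a,
        mul_pos hκ hγ, mul_nonneg (mul_nonneg (mul_nonneg hκ.le hγ.le) (mul_nonneg hκ.le hγ.le)) hB0,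
        mul_nonneg ht.le (sq_nonneg a)]
    · have hs2 : s ^ 2 ≤ (a + b) ^ 2 := by nlinarith
      have h1m : κ * γ * (κ * γ + t) * b ^ 2 ≤ κ * γ * (κ * γ + t) * (B * t) :=
        mul_le_mul_of_nonneg_left h1 (by positivity)
      have hmain : t * (κ * γ * s ^ 2) ≤ t * (κ * γ * (κ * γ + t) * B + (κ * γ + t) * a ^ 2) := by
        nlinarith [sq_nonneg (κ * γ * b - t * a), h1m,
          mul_le_mul_of_nonneg_left hs2 (by positivity : (0:ℝ) ≤ t * (κ * γ))]
      exact (mul_le_mul_iff_right₀ ht).mp hmain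
  have hstep : κ ^ 2 * γ / (2 * (κ * γ + t) ^ 2) * s ^ 2 ≤ κ / (2 * (κ * γ + t)) * s ^ 2 := by
    apply mul_le_mul_of_nonneg_right _ (sq_nonneg s)
    rw [div_le_div_iff₀ (by positivity) (by positivity)]
    nlinarith [mul_pos (mul_pos hκ hκ) (mul_pos hγ ht), mul_pos hκ (mul_pos ht ht)]
  have hstep2 : κ / (2 * (κ * γ + t)) * s ^ 2 ≤ κ / 2 * B + 1 / (2 * γ) * a ^ 2 := by
    rw [div_mul_eq_mul_div, div_le_iff₀ (by positivity)]
    have expand : (κ / 2 * B + 1 / (2 * γ) * a ^ 2) * (2 * (κ * γ + t))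
        = (κ * γ * (κ * γ + t) * B + (κ * γ + t) * a ^ 2) / γ := by
      field_simp
    rw [expand, le_div_iff₀ hγ]
    nlinarith [key]
  linarith

lemma scalar_ineq (κ γ q R a b s : ℝ) (hκ : 0 < κ) (hγ : 0 < γ) (hq1 : 1 ≤ q) (hq2 : q < 2)
    (hR : 0 < R) (ha : 0 ≤ a) (hb : 0 ≤ b) (hs : 0 ≤ s) (hsR : s ≤ R) (hab : s ≤ a + b) :
    κ ^ 2 * γ / (2 * (κ * γ + R ^ (2 - q)) ^ 2) * s ^ 2 ≤ κ / q * b ^ q + 1 / (2 * γ) * a ^ 2 := by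
  have hq0 : (0:ℝ) < q := by linarith
  have ht : 0 < R ^ (2 - q) := Real.rpow_pos_of_pos hR _
  have hB0 : 0 ≤ b ^ q := Real.rpow_nonneg hb q
  have hcase : s ^ 2 ≤ b ^ q * R ^ (2 - q) ∨ b ^ 2 ≤ b ^ q * R ^ (2 - q) := by
    rcases le_or_gt s b with hc | hc
    · left
      calc s ^ 2 ≤ s ^ q * R ^ (2 - q) := pow_bound s R q hs hR hsR hq1 hq2
      _ ≤ b ^ q * R ^ (2 - q) :=
          mul_le_mul_of_nonneg_right (Real.rpow_le_rpow hs hc hq0.le) ht.le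
    · right; exact pow_bound b R q hb hR (by linarith) hq1 hq2
  have halg := alg_ineq κ γ (R ^ (2 - q)) (b ^ q) a b s hκ hγ ht hB0 ha hb hs hab hcase
  have hstep3 : κ / 2 * b ^ q ≤ κ / q * b ^ q :=
    mul_le_mul_of_nonneg_right (div_le_div_of_nonneg_left hκ.le hq0 hq2.le) hB0
  linarith

noncomputable section

/-- let `F : ℝⁿ → ℝ ∪ {+∞}` (modeled as an `EReal`-valued function never
taking the value `⊥`) be proper closed convex, with nonempty minimizer set `X*` and (real)
minimal value `F*`, let `γ > 0`, `q ∈ [1,2)`, and let `F_γ` be the Moreau envelope of `F`.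
Fix `x₀`.  Assume `F` satisfies `q`-growth with constant `κ > 0` on the level set
`{y : F(y) ≤ F(x₀)}` (where `ybar` denotes the Euclidean projection of `y` onto `X*`),
and that there is `R > 0` with `‖x − x*‖ ≤ R` for every `x` with `F_γ(x) ≤ F_γ(x₀)` and
every `x* ∈ X*`.  Then for every `x` with `F_γ(x) ≤ F_γ(x₀)`:
`F_γ(x) − F* ≥ κ²γ/(2(κγ + R^{2−q})²) · ‖x − xbar‖²`. -/
theorem moreau_envelope_q_growth (n : ℕ)
    (F : EuclideanSpace ℝ (Fin n) → EReal)
    (hbot : ∀ x, F x ≠ ⊥) (hproper : ∃ x, F x ≠ ⊤)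
    (hclosed : LowerSemicontinuous F)
    (hconvex : ∀ (u v : EuclideanSpace ℝ (Fin n)) (a c : ℝ), 0 ≤ a → 0 ≤ c → a + c = 1 →
      F (a • u + c • v) ≤ (a : EReal) * F u + (c : EReal) * F v)
    (Fs : ℝ) (Xs : Set (EuclideanSpace ℝ (Fin n)))
    (hXsne : Xs.Nonempty) (hXs : Xs = {y | F y = (Fs : EReal)})
    (hmin : ∀ y, (Fs : EReal) ≤ F y)
    (γ q : ℝ) (hγ : 0 < γ) (hq1 : 1 ≤ q) (hq2 : q < 2)
    (Fγ : EuclideanSpace ℝ (Fin n) → EReal)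
    (hFγ : ∀ x, Fγ x = ⨅ u, F u + ((1 / (2 * γ) * ‖u - x‖ ^ 2 : ℝ) : EReal))
    (x₀ : EuclideanSpace ℝ (Fin n)) (κ : ℝ) (hκ : 0 < κ)
    (hgrowth : ∀ y, F y ≤ F x₀ → ∀ ybar ∈ Xs, (∀ z ∈ Xs, ‖y - ybar‖ ≤ ‖y - z‖) →
      ((Fs + κ / q * ‖y - ybar‖ ^ q : ℝ) : EReal) ≤ F y)
    (R : ℝ) (hR : 0 < R)
    (hbound : ∀ x, Fγ x ≤ Fγ x₀ → ∀ xs ∈ Xs, ‖x - xs‖ ≤ R) :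
    ∀ x, Fγ x ≤ Fγ x₀ → ∀ xbar ∈ Xs, (∀ z ∈ Xs, ‖x - xbar‖ ≤ ‖x - z‖) →
      ((Fs + κ ^ 2 * γ / (2 * (κ * γ + R ^ (2 - q)) ^ 2) * ‖x - xbar‖ ^ 2 : ℝ) : EReal)
        ≤ Fγ x := by
  intro x hx xbar hxbar hnear
  by_contra hcon
  push_neg at hcon
  have hpnonneg : ∀ u y : EuclideanSpace ℝ (Fin n), (0:ℝ) ≤ 1 / (2 * γ) * ‖u - y‖ ^ 2 := by
    intro u y; positivity
  have hterm_ge_Fs : ∀ y u : EuclideanSpace ℝ (Fin n),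
      (Fs : EReal) ≤ F u + ((1 / (2 * γ) * ‖u - y‖ ^ 2 : ℝ) : EReal) := fun y u =>
    le_trans (hmin u) (le_add_of_nonneg_right (EReal.coe_nonneg.2 (hpnonneg u y)))
  have hFs_le : ∀ y, (Fs : EReal) ≤ Fγ y := by
    intro y; rw [hFγ]; exact le_iInf (hterm_ge_Fs y)
  have hXs_closed : IsClosed Xs := by
    have hXs' : Xs = F ⁻¹' (Set.Iic (Fs : EReal)) := by
      ext y
      simp only [hXs, Set.mem_setOf_eq, Set.mem_preimage, Set.mem_Iic]
      exact ⟨le_of_eq, fun h => le_antisymm h (hmin y)⟩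
    rw [hXs']
    exact hclosed.isClosed_preimage _
  -- Claim A : the bound holds termwise on the level set
  have claimA : ∀ u, F u ≤ F x₀ →
      ((Fs + κ ^ 2 * γ / (2 * (κ * γ + R ^ (2 - q)) ^ 2) * ‖x - xbar‖ ^ 2 : ℝ) : EReal)
        ≤ F u + ((1 / (2 * γ) * ‖u - x‖ ^ 2 : ℝ) : EReal) := by
    intro u hu
    by_cases hutop : F u = ⊤
    · rw [hutop, EReal.top_add_coe]; exact le_top
    obtain ⟨ubar, hubar, hud⟩ := hXs_closed.exists_infDist_eq_dist hXsne u
    have hproj : ∀ z ∈ Xs, ‖u - ubar‖ ≤ ‖u - z‖ := by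
      intro z hz
      rw [← dist_eq_norm, ← dist_eq_norm, ← hud]
      exact Metric.infDist_le_dist_of_mem hz
    have hg := hgrowth u hu ubar hubar hproj
    have hfu : ((F u).toReal : EReal) = F u := EReal.coe_toReal hutop (hbot u)
    rw [← hfu] at hg ⊢
    rw [EReal.coe_le_coe_iff] at hg
    rw [← EReal.coe_add, EReal.coe_le_coe_iff]
    have hsR : ‖x - xbar‖ ≤ R := hbound x hx xbar hxbar
    have htri : ‖x - xbar‖ ≤ ‖u - x‖ + ‖u - ubar‖ := by
      have h1 : ‖x - xbar‖ ≤ ‖x - ubar‖ := hnear ubar hubar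
      have h2 : ‖x - ubar‖ ≤ ‖x - u‖ + ‖u - ubar‖ := by
        rw [show x - ubar = (x - u) + (u - ubar) by abel]
        exact norm_add_le _ _
      rw [norm_sub_rev x u] at h2
      linarith
    have hscal := scalar_ineq κ γ q R (‖u - x‖) (‖u - ubar‖) (‖x - xbar‖) hκ hγ hq1 hq2 hR
      (norm_nonneg _) (norm_nonneg _) (norm_nonneg _) hsR htri
    linarith
  -- every term is ≥ min(target, F x₀)
  have hminb : min ((Fs + κ ^ 2 * γ / (2 * (κ * γ + R ^ (2 - q)) ^ 2) * ‖x - xbar‖ ^ 2 : ℝ) : EReal)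
      (F x₀) ≤ Fγ x := by
    rw [hFγ]; apply le_iInf; intro u
    by_cases hu : F u ≤ F x₀
    · exact le_trans (min_le_left _ _) (claimA u hu)
    · push_neg at hu
      exact le_trans (min_le_right _ _)
        (le_trans hu.le (le_add_of_nonneg_right (EReal.coe_nonneg.2 (hpnonneg u x))))
  have hx0le : F x₀ ≤ Fγ x := by
    rcases le_total ((Fs + κ ^ 2 * γ / (2 * (κ * γ + R ^ (2 - q)) ^ 2) * ‖x - xbar‖ ^ 2 : ℝ) : EReal)
      (F x₀) with h | h
    · rw [min_eq_left h] at hminb; exact absurd hcon (not_lt.2 hminb)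
    · rw [min_eq_right h] at hminb; exact hminb
  have hFγx0_le : Fγ x₀ ≤ F x₀ := by
    rw [hFγ]
    have h := iInf_le (fun u => F u + ((1 / (2 * γ) * ‖u - x₀‖ ^ 2 : ℝ) : EReal)) x₀
    simpa using h
  have hchain : Fγ x = F x₀ := le_antisymm (hx.trans hFγx0_le) hx0le
  have hEq0 : Fγ x₀ = F x₀ := le_antisymm hFγx0_le (hx0le.trans hx)
  have hx0top : F x₀ ≠ ⊤ := by
    intro h
    rw [h] at hchain
    rw [hchain] at hcon
    exact not_top_lt hcon
  have hFx0 : F x₀ = ((F x₀).toReal : EReal) := (EReal.coe_toReal hx0top (hbot x₀)).symm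
  set A := (F x₀).toReal with hA
  have hFsA : Fs ≤ A := by
    have h := hmin x₀
    rw [hFx0] at h
    exact EReal.coe_le_coe_iff.mp h
  obtain ⟨w, hw⟩ := hXsne
  have hFw : F w = (Fs : EReal) := by rw [hXs] at hw; exact hw
  have hkey : ∀ lam : ℝ, 0 < lam → lam ≤ 1 →
      A ≤ (1 - lam) * A + lam * Fs + 1 / (2 * γ) * (lam * ‖w - x₀‖) ^ 2 := by
    intro lam h0 h1
    have hcvx := hconvex x₀ w (1 - lam) lam (by linarith) h0.le (by ring)
    rw [hFx0, hFw, ← EReal.coe_mul, ← EReal.coe_mul, ← EReal.coe_add] at hcvx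
    have hnorm : ‖((1 - lam) • x₀ + lam • w) - x₀‖ = lam * ‖w - x₀‖ := by
      have heq : ((1 - lam) • x₀ + lam • w) - x₀ = lam • (w - x₀) := by
        rw [sub_smul, one_smul, smul_sub]; abel
      rw [heq, norm_smul, Real.norm_eq_abs, abs_of_pos h0]
    have hterm : Fγ x₀ ≤ F ((1 - lam) • x₀ + lam • w)
        + ((1 / (2 * γ) * ‖((1 - lam) • x₀ + lam • w) - x₀‖ ^ 2 : ℝ) : EReal) := by
      rw [hFγ]; exact iInf_le _ _
    rw [hnorm] at hterm
    have hfinal : (A : EReal) ≤ (((1 - lam) * A + lam * Fs + 1 / (2 * γ) * (lam * ‖w - x₀‖) ^ 2 : ℝ) : EReal) := by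
      calc (A : EReal) = Fγ x₀ := by rw [hEq0, hFx0]
      _ ≤ F ((1 - lam) • x₀ + lam • w) + ((1 / (2 * γ) * (lam * ‖w - x₀‖) ^ 2 : ℝ) : EReal) := hterm
      _ ≤ (((1 - lam) * A + lam * Fs : ℝ) : EReal) + ((1 / (2 * γ) * (lam * ‖w - x₀‖) ^ 2 : ℝ) : EReal) :=
          add_le_add_left hcvx _
      _ = _ := by rw [← EReal.coe_add]
    exact EReal.coe_le_coe_iff.mp hfinal
  have hAFs : A = Fs := by
    by_contra hne
    have hAgt : Fs < A := lt_of_le_of_ne hFsA (Ne.symm hne)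
    set r := ‖w - x₀‖ with hr
    set lam := min 1 (γ * (A - Fs) / (r ^ 2 + 1)) with hlam
    have hlam0 : 0 < lam := lt_min one_pos (div_pos (mul_pos hγ (sub_pos.2 hAgt)) (by positivity))
    have hlam1 : lam ≤ 1 := min_le_left _ _
    have hlam2 : lam * (r ^ 2 + 1) ≤ γ * (A - Fs) :=
      (le_div_iff₀ (by positivity)).mp (min_le_right _ _)
    have h := hkey lam hlam0 hlam1
    have h'' : lam * (A - Fs) ≤ 1 / (2 * γ) * (lam * r) ^ 2 := by nlinarith [h]
    have h2 : 2 * γ * (lam * (A - Fs)) ≤ (lam * r) ^ 2 := by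
      have hm := mul_le_mul_of_nonneg_left h'' (by positivity : (0:ℝ) ≤ 2 * γ)
      rw [show 2 * γ * (1 / (2 * γ) * (lam * r) ^ 2) = (lam * r) ^ 2 by field_simp] at hm
      exact hm
    nlinarith [h2, mul_le_mul_of_nonneg_left hlam2 hlam0.le,
      mul_pos (mul_pos hγ hlam0) (sub_pos.2 hAgt)]
  have hFγxFs : Fγ x = (Fs : EReal) := by rw [hchain, hFx0, hAFs]
  have hFxle : F x ≤ (Fs : EReal) := by
    by_contra hgt
    push_neg at hgt
    obtain ⟨y, hy1, hy2⟩ := EReal.exists_between_coe_real hgt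
    obtain ⟨ε, hε, hball⟩ := Metric.eventually_nhds_iff.mp (hclosed x (y : EReal) hy2)
    have hy1' : Fs < y := EReal.coe_lt_coe_iff.mp hy1
    have hlb : min ((y : ℝ) : EReal) ((Fs + 1 / (2 * γ) * ε ^ 2 : ℝ) : EReal) ≤ Fγ x := by
      rw [hFγ]; apply le_iInf; intro u
      by_cases hd : dist u x < ε
      · exact le_trans (min_le_left _ _) (le_trans (hball hd).le
          (le_add_of_nonneg_right (EReal.coe_nonneg.2 (hpnonneg u x))))
      · push_neg at hd
        have hεu : ε ≤ ‖u - x‖ := by rw [← dist_eq_norm]; exact hd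
        have hre : (Fs + 1 / (2 * γ) * ε ^ 2 : ℝ) ≤ Fs + 1 / (2 * γ) * ‖u - x‖ ^ 2 := by
          have := mul_le_mul_of_nonneg_left (pow_le_pow_left₀ hε.le hεu 2)
            (by positivity : (0:ℝ) ≤ 1 / (2 * γ))
          linarith
        refine le_trans (min_le_right _ _) ?_
        calc ((Fs + 1 / (2 * γ) * ε ^ 2 : ℝ) : EReal)
            ≤ ((Fs + 1 / (2 * γ) * ‖u - x‖ ^ 2 : ℝ) : EReal) := EReal.coe_le_coe_iff.2 hre
        _ = (Fs : EReal) + ((1 / (2 * γ) * ‖u - x‖ ^ 2 : ℝ) : EReal) := by rw [EReal.coe_add]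
        _ ≤ F u + ((1 / (2 * γ) * ‖u - x‖ ^ 2 : ℝ) : EReal) := add_le_add_left (hmin u) _
    rw [hFγxFs] at hlb
    have hgt2 : (Fs : EReal) < min ((y : ℝ) : EReal) ((Fs + 1 / (2 * γ) * ε ^ 2 : ℝ) : EReal) :=
      lt_min (EReal.coe_lt_coe_iff.2 hy1') (EReal.coe_lt_coe_iff.2 (by
        have hp : (0:ℝ) < 1 / (2 * γ) * ε ^ 2 := by positivity
        linarith))
    exact absurd hlb (not_le.2 hgt2)
  have hxXs : x ∈ Xs := by
    rw [hXs]; exact le_antisymm hFxle (hmin x)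
  have hs0 : ‖x - xbar‖ = 0 := le_antisymm (by simpa using hnear x hxXs) (norm_nonneg _)
  rw [hs0] at hcon
  norm_num at hcon
  exact absurd hcon (not_lt.2 (hFs_le x))
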